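/- For the rank-one Dunkl operator T_k f(x) = f'(x) + k·(f(x) − f(−x))/x with parameter k ≥ 0, and for any y ∈ ℝ, the function x ↦ E_k(x, y) (the rank-one Dunkl kernel, defined via E_k(x,y) = (Γ(k+1/2)/(Γ(1/2)Γ(k))) ∫_{−1}^{1} e^{xyt}(1−t)^{k−1}(1+t)^{k} dt for k > 0) satisfies T_k E_k(·, y)(x) = y · E_k(x, y) for all x ≠ 0. -/

import Mathlib

open MeasureTheory

open Set intervalIntegral

lemma aesm_aux {a b : ℝ} (hab : a ≤ b) {f : ℝ → ℝ} (hf : ContinuousOn f (Set.Ioo a b)) :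
    AEStronglyMeasurable f (volume.restrict (Set.uIoc a b)) := by
  rw [Set.uIoc_of_le hab, ← MeasureTheory.Measure.restrict_congr_set MeasureTheory.Ioo_ae_eq_Ioc]
  exact hf.aestronglyMeasurable measurableSet_Ioo

lemma contOn_rpow_aux {s : Set ℝ} {f : ℝ → ℝ} (hf : Continuous f) (h0 : ∀ t ∈ s, f t ≠ 0)
    (p : ℝ) : ContinuousOn (fun t => f t ^ p) s := fun t ht =>
  ((Real.continuousAt_rpow_const _ p (Or.inl (h0 t ht))).comp hf.continuousAt).continuousWithinAt

lemma rpow_split {a : ℝ} (ha : 0 ≤ a) {k : ℝ} (hk : 0 < k) : a * a ^ (k - 1) = a ^ k := by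
  rcases eq_or_lt_of_le ha with h | h
  · rw [← h, Real.zero_rpow hk.ne', zero_mul]
  · calc a * a ^ (k - 1) = a ^ (1 : ℝ) * a ^ (k - 1) := by rw [Real.rpow_one]
      _ = a ^ (1 + (k - 1)) := (Real.rpow_add h _ _).symm
      _ = a ^ k := by ring_nf

lemma II_aux (p q : ℝ) (hp : -1 < p) (hq : -1 < q) (h : ℝ → ℝ) (hh : Continuous h) :
    IntervalIntegrable (fun t => h t * (1 - t) ^ p * (1 + t) ^ q) volume (-1) 1 := by
  obtain ⟨C, hC⟩ := (isCompact_Icc (a := (-1:ℝ)) (b := 1)).exists_bound_of_continuousOn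
    hh.continuousOn
  have hC0 : 0 ≤ C := le_trans (norm_nonneg _) (hC 0 (by norm_num))
  have bound1 : ∀ r u : ℝ, 1 ≤ u → u ≤ 2 → u ^ r ≤ 2 ^ r + 1 := by
    intro r u h1 h2
    rcases le_or_gt 0 r with hr | hr
    · have := Real.rpow_le_rpow (by linarith) h2 hr
      linarith
    · have := Real.rpow_le_one_of_one_le_of_nonpos h1 hr.le
      have : (0:ℝ) < 2 ^ r := Real.rpow_pos_of_pos (by norm_num) r
      linarith [Real.rpow_le_one_of_one_le_of_nonpos h1 hr.le]
  have cont : ContinuousOn (fun t => h t * (1 - t) ^ p * (1 + t) ^ q) (Set.Ioo (-1:ℝ) 1) := by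
    refine ContinuousOn.mul (ContinuousOn.mul hh.continuousOn ?_) ?_
    · exact contOn_rpow_aux (continuous_const.sub continuous_id)
        (fun t ht => by intro hc; simp only [Pi.sub_apply, id] at hc; rw [sub_eq_zero] at hc; nlinarith [ht.2]) p
    · exact contOn_rpow_aux (continuous_const.add continuous_id)
        (fun t ht => by intro hc; simp only [Pi.add_apply, id] at hc; nlinarith [ht.1]) q
  have half1 : IntervalIntegrable (fun t => h t * (1 - t) ^ p * (1 + t) ^ q) volume 0 1 := by
    have base : IntervalIntegrable (fun t : ℝ => (1 - t) ^ p) volume 0 1 := by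
      have := (intervalIntegrable_rpow' (a := 0) (b := 1) hp).comp_sub_left 1
      simpa using this.symm
    refine IntervalIntegrable.mono_fun' ((base.const_mul (C * (2 ^ q + 1)))) ?_ ?_
    · exact aesm_aux (by norm_num) (cont.mono (fun t ht => ⟨by linarith [ht.1], ht.2⟩))
    · rw [Filter.EventuallyLE, ae_restrict_iff' measurableSet_uIoc]
      refine Filter.Eventually.of_forall fun t ht => ?_
      rw [Set.uIoc_of_le (by norm_num : (0:ℝ) ≤ 1)] at ht
      have ht1 : 0 < t := ht.1
      have ht2 : t ≤ 1 := ht.2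
      have n1 : (0:ℝ) ≤ (1 - t) ^ p := Real.rpow_nonneg (by linarith) p
      have n2 : (0:ℝ) ≤ (1 + t) ^ q := Real.rpow_nonneg (by linarith) q
      have hCt : |h t| ≤ C := hC t ⟨by linarith, by linarith⟩
      have hb : (1 + t) ^ q ≤ 2 ^ q + 1 := bound1 q (1 + t) (by linarith) (by linarith)
      have : ‖h t * (1 - t) ^ p * (1 + t) ^ q‖ = |h t| * (1 - t) ^ p * (1 + t) ^ q := by
        rw [Real.norm_eq_abs, abs_mul, abs_mul, abs_of_nonneg n1, abs_of_nonneg n2]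
      rw [this]
      calc |h t| * (1 - t) ^ p * (1 + t) ^ q ≤ C * (1 - t) ^ p * (2 ^ q + 1) := by
            apply mul_le_mul (mul_le_mul_of_nonneg_right hCt n1) hb n2
            positivity
        _ = C * (2 ^ q + 1) * (1 - t) ^ p := by ring
  have half2 : IntervalIntegrable (fun t => h t * (1 - t) ^ p * (1 + t) ^ q) volume (-1) 0 := by
    have base : IntervalIntegrable (fun t : ℝ => (1 + t) ^ q) volume (-1) 0 := by
      have := (intervalIntegrable_rpow' (a := 0) (b := 1) hq).comp_add_right 1
      simpa [add_comm] using this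
    refine IntervalIntegrable.mono_fun' ((base.const_mul (C * (2 ^ p + 1)))) ?_ ?_
    · exact aesm_aux (by norm_num) (cont.mono (fun t ht => ⟨ht.1, by linarith [ht.2]⟩))
    · rw [Filter.EventuallyLE, ae_restrict_iff' measurableSet_uIoc]
      refine Filter.Eventually.of_forall fun t ht => ?_
      rw [Set.uIoc_of_le (by norm_num : (-1:ℝ) ≤ 0)] at ht
      have ht1 : -1 < t := ht.1
      have ht2 : t ≤ 0 := ht.2
      have n1 : (0:ℝ) ≤ (1 - t) ^ p := Real.rpow_nonneg (by linarith) p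
      have n2 : (0:ℝ) ≤ (1 + t) ^ q := Real.rpow_nonneg (by linarith) q
      have hCt : |h t| ≤ C := hC t ⟨by linarith, by linarith⟩
      have hb : (1 - t) ^ p ≤ 2 ^ p + 1 := bound1 p (1 - t) (by linarith) (by linarith)
      have : ‖h t * (1 - t) ^ p * (1 + t) ^ q‖ = |h t| * (1 - t) ^ p * (1 + t) ^ q := by
        rw [Real.norm_eq_abs, abs_mul, abs_mul, abs_of_nonneg n1, abs_of_nonneg n2]
      rw [this]
      calc |h t| * (1 - t) ^ p * (1 + t) ^ q ≤ C * (2 ^ p + 1) * (1 + t) ^ q := by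
            apply mul_le_mul (mul_le_mul hCt hb n1 hC0) le_rfl n2
            positivity
        _ = C * (2 ^ p + 1) * (1 + t) ^ q := by ring
  exact half2.trans half1

lemma contOn_core (c p q : ℝ) :
    ContinuousOn (fun t : ℝ => Real.exp (c * t) * (1 - t) ^ p * (1 + t) ^ q)
      (Set.Ioo (-1:ℝ) 1) := by
  refine ContinuousOn.mul (ContinuousOn.mul ?_ ?_) ?_
  · exact (Real.continuous_exp.comp (continuous_const.mul continuous_id)).continuousOn
  · exact contOn_rpow_aux (continuous_const.sub continuous_id)
      (fun t ht => sub_ne_zero.mpr (ne_of_gt ht.2)) p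
  · exact contOn_rpow_aux (continuous_const.add continuous_id)
      (fun t ht => by intro hc; simp only [Pi.add_apply, id] at hc; nlinarith [ht.1]) q

lemma hasDeriv_aux (k : ℝ) (hk : 0 < k) (y x : ℝ) :
    IntervalIntegrable
      (fun t => y * t * (Real.exp (x * y * t) * (1 - t) ^ (k - 1) * (1 + t) ^ k))
      MeasureTheory.volume (-1) 1 ∧
    HasDerivAt
      (fun x => ∫ t in (-1:ℝ)..1, Real.exp (x * y * t) * (1 - t) ^ (k - 1) * (1 + t) ^ k)
      (∫ t in (-1:ℝ)..1, y * t * (Real.exp (x * y * t) * (1 - t) ^ (k - 1) * (1 + t) ^ k)) x := by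
  have hle : ((-1:ℝ)) ≤ 1 := by norm_num
  refine (intervalIntegral.hasDerivAt_integral_of_dominated_loc_of_deriv_le
    (F := fun x t => Real.exp (x * y * t) * (1 - t) ^ (k - 1) * (1 + t) ^ k)
    (F' := fun x t => y * t * (Real.exp (x * y * t) * (1 - t) ^ (k - 1) * (1 + t) ^ k))
    (bound := fun t => (|y| * Real.exp ((|x| + 1) * |y|)) * (1 - t) ^ (k - 1) * (1 + t) ^ k)
    (Metric.ball_mem_nhds x one_pos) ?_ ?_ ?_ ?_ ?_ ?_)
  · exact Filter.Eventually.of_forall fun x' => aesm_aux hle (contOn_core (x' * y) _ _)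
  · exact II_aux (k - 1) k (by linarith) (by linarith) _
      (by fun_prop : Continuous fun t : ℝ => Real.exp (x * y * t))
  · exact aesm_aux hle
      (((continuous_const.mul continuous_id).continuousOn).mul (contOn_core (x * y) (k - 1) k))
  · refine Filter.Eventually.of_forall fun t ht x' hx' => ?_
    rw [Set.uIoc_of_le hle] at ht
    have htl : -1 < t := ht.1
    have htr : t ≤ 1 := ht.2
    have habs : |t| ≤ 1 := abs_le.mpr ⟨htl.le, htr⟩
    have n1 : (0:ℝ) ≤ (1 - t) ^ (k - 1) := Real.rpow_nonneg (by linarith) _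
    have n2 : (0:ℝ) ≤ (1 + t) ^ k := Real.rpow_nonneg (by linarith) _
    have hx'b : |x'| ≤ |x| + 1 := by
      have hd : |x' - x| < 1 := by
        have := Metric.mem_ball.mp hx'
        rwa [Real.dist_eq] at this
      calc |x'| = |x' - x + x| := by ring_nf
        _ ≤ |x' - x| + |x| := abs_add_le _ _
        _ ≤ |x| + 1 := by linarith
    have hexp : Real.exp (x' * y * t) ≤ Real.exp ((|x| + 1) * |y|) := by
      apply Real.exp_le_exp.mpr
      calc x' * y * t ≤ |x' * y * t| := le_abs_self _
        _ = |x'| * |y| * |t| := by rw [abs_mul, abs_mul]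
        _ ≤ (|x| + 1) * |y| * 1 := by gcongr
        _ = (|x| + 1) * |y| := mul_one _
    have hnorm : ‖y * t * (Real.exp (x' * y * t) * (1 - t) ^ (k - 1) * (1 + t) ^ k)‖
        = |y| * |t| * (Real.exp (x' * y * t) * (1 - t) ^ (k - 1) * (1 + t) ^ k) := by
      rw [Real.norm_eq_abs, abs_mul, abs_mul, abs_of_nonneg
        (mul_nonneg (mul_nonneg (Real.exp_pos _).le n1) n2)]
    rw [hnorm]
    calc |y| * |t| * (Real.exp (x' * y * t) * (1 - t) ^ (k - 1) * (1 + t) ^ k)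
        ≤ |y| * 1 * (Real.exp ((|x| + 1) * |y|) * (1 - t) ^ (k - 1) * (1 + t) ^ k) := by
          gcongr
      _ = |y| * Real.exp ((|x| + 1) * |y|) * (1 - t) ^ (k - 1) * (1 + t) ^ k := by ring
  · exact II_aux (k - 1) k (by linarith) (by linarith) _ continuous_const
  · refine Filter.Eventually.of_forall fun t ht x' hx' => ?_
    have h1 : HasDerivAt (fun x' : ℝ => x' * y * t) (1 * y * t) x' :=
      ((hasDerivAt_id x').mul_const y).mul_const t
    have h2 := (h1.exp.mul_const ((1 - t) ^ (k - 1))).mul_const ((1 + t) ^ k)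
    have h3 : y * t * (Real.exp (x' * y * t) * (1 - t) ^ (k - 1) * (1 + t) ^ k)
        = Real.exp (x' * y * t) * (1 * y * t) * (1 - t) ^ (k - 1) * (1 + t) ^ k := by ring
    show HasDerivAt (fun x => Real.exp (x * y * t) * (1 - t) ^ (k - 1) * (1 + t) ^ k)
      (y * t * (Real.exp (x' * y * t) * (1 - t) ^ (k - 1) * (1 + t) ^ k)) x'
    rw [h3]
    exact h2

lemma ftc_aux (k : ℝ) (hk : 0 < k) (c : ℝ) :
    ∫ t in (-1:ℝ)..1,
      ((c * Real.exp (c * t)) * (1 - t) ^ k * (1 + t) ^ k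
        - (2 * k * t * Real.exp (c * t)) * (1 - t) ^ (k - 1) * (1 + t) ^ (k - 1)) = 0 := by
  have hle : ((-1:ℝ)) ≤ 1 := by norm_num
  have hcont : Continuous (fun t : ℝ => Real.exp (c * t) * (1 - t) ^ k * (1 + t) ^ k) := by
    refine ((Real.continuous_exp.comp (continuous_const.mul continuous_id)).mul
      ((Real.continuous_rpow_const hk.le).comp (continuous_const.sub continuous_id))).mul
      ((Real.continuous_rpow_const hk.le).comp (continuous_const.add continuous_id))
  have hint : IntervalIntegrable (fun t : ℝ =>
      (c * Real.exp (c * t)) * (1 - t) ^ k * (1 + t) ^ k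
        - (2 * k * t * Real.exp (c * t)) * (1 - t) ^ (k - 1) * (1 + t) ^ (k - 1))
      MeasureTheory.volume (-1) 1 := by
    refine (II_aux k k (by linarith) (by linarith) _ ?_).sub
      (II_aux (k - 1) (k - 1) (by linarith) (by linarith) _ ?_) <;> fun_prop
  have hFTC := intervalIntegral.integral_eq_sub_of_hasDeriv_right_of_le hle
    (f := fun t : ℝ => Real.exp (c * t) * (1 - t) ^ k * (1 + t) ^ k)
    (f' := fun t : ℝ => (c * Real.exp (c * t)) * (1 - t) ^ k * (1 + t) ^ k
        - (2 * k * t * Real.exp (c * t)) * (1 - t) ^ (k - 1) * (1 + t) ^ (k - 1))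
    hcont.continuousOn ?_ hint
  · rw [hFTC]
    norm_num [Real.zero_rpow hk.ne']
  · intro t ht
    have h1t : (0:ℝ) < 1 - t := by nlinarith [ht.2]
    have h2t : (0:ℝ) < 1 + t := by nlinarith [ht.1]
    have hm : HasDerivAt (fun t : ℝ => 1 - t) (-1) t := by
      simpa using (hasDerivAt_id t).const_sub 1
    have hp : HasDerivAt (fun t : ℝ => 1 + t) 1 t := by
      simpa using (hasDerivAt_id t).const_add 1
    have ha : HasDerivAt (fun t : ℝ => (1 - t) ^ k) (k * (1 - t) ^ (k - 1) * (-1)) t :=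
      (Real.hasDerivAt_rpow_const (Or.inl h1t.ne')).comp t hm
    have hb : HasDerivAt (fun t : ℝ => (1 + t) ^ k) (k * (1 + t) ^ (k - 1) * 1) t :=
      (Real.hasDerivAt_rpow_const (Or.inl h2t.ne')).comp t hp
    have he : HasDerivAt (fun t : ℝ => Real.exp (c * t)) (Real.exp (c * t) * (c * 1)) t := by
      exact ((hasDerivAt_id t).const_mul c).exp
    have hf := (he.mul ha).mul hb
    refine HasDerivAt.hasDerivWithinAt ?_
    convert hf using 1
    · rfl
    · rfl
    simp only [Pi.mul_apply, ← rpow_split h1t.le hk, ← rpow_split h2t.le hk]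
    ring

lemma refl_aux (k x y : ℝ) :
    (∫ t in (-1:ℝ)..1, Real.exp (-x * y * t) * (1 - t) ^ (k - 1) * (1 + t) ^ k)
      = ∫ t in (-1:ℝ)..1, Real.exp (x * y * t) * (1 + t) ^ (k - 1) * (1 - t) ^ k := by
  have h := intervalIntegral.integral_comp_neg (a := (-1:ℝ)) (b := 1)
    (fun t => Real.exp (x * y * t) * (1 + t) ^ (k - 1) * (1 - t) ^ k)
  simp only [neg_neg] at h
  rw [show ((-(1:ℝ)) : ℝ) = -1 from rfl] at h
  rw [← h]
  refine intervalIntegral.integral_congr fun t _ => ?_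
  rw [show x * y * -t = -x * y * t by ring, show (1:ℝ) + -t = 1 - t by ring,
    show (1:ℝ) - -t = 1 + t by ring]

/-- The rank-one Dunkl operator `T_k f(x) = f'(x) + k (f(x) - f(-x))/x`. -/
noncomputable def dunklT (k : ℝ) (f : ℝ → ℝ) (x : ℝ) : ℝ :=
  deriv f x + k * (f x - f (-x)) / x

/-- The rank-one Dunkl kernel for `k > 0`. -/
noncomputable def dunklE (k x y : ℝ) : ℝ :=
  (Real.Gamma (k + 1/2) / (Real.Gamma (1/2) * Real.Gamma k)) *
    ∫ t in (-1:ℝ)..1, Real.exp (x * y * t) * (1 - t) ^ (k - 1) * (1 + t) ^ k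

theorem dunkl_kernel_eigenfunction (k : ℝ) (hk : 0 < k) (y : ℝ) :
    ∀ x : ℝ, x ≠ 0 → dunklT k (fun x => dunklE k x y) x = y * dunklE k x y := by
  intro x hx
  have hle : ((-1:ℝ)) ≤ 1 := by norm_num
  obtain ⟨iD, hder⟩ := hasDeriv_aux k hk y x
  set c := Real.Gamma (k + 1/2) / (Real.Gamma (1/2) * Real.Gamma k) with hc
  set A := ∫ t in (-1:ℝ)..1, Real.exp (x * y * t) * (1 - t) ^ (k - 1) * (1 + t) ^ k with hA
  set B := ∫ t in (-1:ℝ)..1, Real.exp (x * y * t) * (1 + t) ^ (k - 1) * (1 - t) ^ k with hB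
  set D := ∫ t in (-1:ℝ)..1,
    y * t * (Real.exp (x * y * t) * (1 - t) ^ (k - 1) * (1 + t) ^ k) with hD
  set P := ∫ t in (-1:ℝ)..1, Real.exp (x * y * t) * (1 - t) ^ k * (1 + t) ^ k with hP
  set Q := ∫ t in (-1:ℝ)..1,
    t * Real.exp (x * y * t) * (1 - t) ^ (k - 1) * (1 + t) ^ (k - 1) with hQ
  have iA : IntervalIntegrable
      (fun t => Real.exp (x * y * t) * (1 - t) ^ (k - 1) * (1 + t) ^ k) volume (-1) 1 :=
    II_aux _ _ (by linarith) (by linarith) _ (by fun_prop)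
  have iB : IntervalIntegrable
      (fun t => Real.exp (x * y * t) * (1 + t) ^ (k - 1) * (1 - t) ^ k) volume (-1) 1 := by
    have h := II_aux k (k - 1) (by linarith) (by linarith)
      (fun t => Real.exp (x * y * t)) (by fun_prop)
    have heq : (fun t : ℝ => Real.exp (x * y * t) * (1 + t) ^ (k - 1) * (1 - t) ^ k)
        = fun t : ℝ => Real.exp (x * y * t) * (1 - t) ^ k * (1 + t) ^ (k - 1) :=
      funext fun t => by ring
    rw [heq]; exact h
  have iP : IntervalIntegrable
      (fun t => Real.exp (x * y * t) * (1 - t) ^ k * (1 + t) ^ k) volume (-1) 1 :=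
    II_aux _ _ (by linarith) (by linarith) _ (by fun_prop)
  have hkey1 : y * A - D = y * P := by
    rw [hA, hD, hP, ← intervalIntegral.integral_const_mul,
      ← intervalIntegral.integral_const_mul, ← intervalIntegral.integral_sub (iA.const_mul y) iD]
    refine intervalIntegral.integral_congr fun t ht => ?_
    rw [Set.uIcc_of_le hle] at ht
    have e1 : (1 - t) * (1 - t) ^ (k - 1) = (1 - t) ^ k :=
      rpow_split (by linarith [ht.2]) hk
    rw [← e1]; ring
  have hkey2 : A - B = 2 * Q := by
    rw [hA, hB, hQ, ← intervalIntegral.integral_const_mul,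
      ← intervalIntegral.integral_sub iA iB]
    refine intervalIntegral.integral_congr fun t ht => ?_
    rw [Set.uIcc_of_le hle] at ht
    have e1 : (1 - t) * (1 - t) ^ (k - 1) = (1 - t) ^ k :=
      rpow_split (by linarith [ht.2]) hk
    have e2 : (1 + t) * (1 + t) ^ (k - 1) = (1 + t) ^ k :=
      rpow_split (by linarith [ht.1]) hk
    rw [← e1, ← e2]; ring
  have hkey3 : x * y * P = 2 * k * Q := by
    have i1 : IntervalIntegrable
        (fun t => (x * y * Real.exp (x * y * t)) * (1 - t) ^ k * (1 + t) ^ k) volume (-1) 1 :=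
      II_aux _ _ (by linarith) (by linarith) _ (by fun_prop)
    have i2 : IntervalIntegrable
        (fun t => (2 * k * t * Real.exp (x * y * t)) * (1 - t) ^ (k - 1) * (1 + t) ^ (k - 1))
        volume (-1) 1 :=
      II_aux _ _ (by linarith) (by linarith) _ (by fun_prop)
    have h0 := ftc_aux k hk (x * y)
    rw [intervalIntegral.integral_sub i1 i2] at h0
    have e1 : (∫ t in (-1:ℝ)..1, (x * y * Real.exp (x * y * t)) * (1 - t) ^ k * (1 + t) ^ k)
        = x * y * P := by
      rw [hP, ← intervalIntegral.integral_const_mul]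
      exact intervalIntegral.integral_congr fun t ht => by ring
    have e2 : (∫ t in (-1:ℝ)..1,
          (2 * k * t * Real.exp (x * y * t)) * (1 - t) ^ (k - 1) * (1 + t) ^ (k - 1))
        = 2 * k * Q := by
      rw [hQ, ← intervalIntegral.integral_const_mul]
      exact intervalIntegral.integral_congr fun t ht => by ring
    rw [e1, e2] at h0
    linarith
  have hEx : dunklE k x y = c * A := by
    simp only [dunklE]; rw [hc, hA]
  have hEneg : dunklE k (-x) y = c * B := by
    simp only [dunklE]; rw [hc, refl_aux k x y, hB]
  have hDeriv : deriv (fun x => dunklE k x y) x = c * D := by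
    have h1 : (fun x' => dunklE k x' y) = fun x' => c *
        ∫ t in (-1:ℝ)..1, Real.exp (x' * y * t) * (1 - t) ^ (k - 1) * (1 + t) ^ k := by
      funext x'; simp only [dunklE]; rw [hc]
    rw [h1]
    exact (hder.const_mul c).deriv
  simp only [dunklT]
  rw [hDeriv, hEx, hEneg]
  have h4 : k * (c * A - c * B) / x = c * (y * P) := by
    have h5 : k * (c * A - c * B) = x * (c * (y * P)) := by
      linear_combination (c * k) * hkey2 + (-c) * hkey3
    rw [h5, mul_div_cancel_left₀ _ hx]
  rw [h4]
  linear_combination (-c) * hkey1
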